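/- Let k > 0 and t₀ ∈ ℝ. Suppose e, φ : [t₀, ∞) → ℝ are differentiable with e'(t) = −k·e(t)·cos²(φ(t)) and φ'(t) = −k·sin(φ(t)) for all t ≥ t₀, and φ(t₀) ∈ (−π, π]. Then there exist M ≥ 0 and μ > 0 such that |e(t)| ≤ M·exp(−μ·(t − t₀)) for all t ≥ t₀; in particular e(t) → 0 exponentially. -/

import Mathlib

open Real

/-- Global exponential stability of the distance error `e = 0` for the
closed-loop unicycle error dynamics `e' = -k e cos²(φ)`, `φ' = -k sin φ`
with initial heading error in `(-π, π]`. -/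
theorem distance_error_exponentially_stable
    (k t₀ : ℝ) (hk : 0 < k) (e φ : ℝ → ℝ)
    (he : ∀ t, t₀ ≤ t → HasDerivAt e (-k * e t * (Real.cos (φ t))^2) t)
    (hφ : ∀ t, t₀ ≤ t → HasDerivAt φ (-k * Real.sin (φ t)) t)
    (hinit : φ t₀ ∈ Set.Ioc (-Real.pi) Real.pi) :
    ∃ M : ℝ, 0 ≤ M ∧ ∃ μ : ℝ, 0 < μ ∧
      ∀ t, t₀ ≤ t → |e t| ≤ M * Real.exp (-μ * (t - t₀)) := by
  refine ⟨4 * |e t₀|, by positivity, k / 2, by positivity, ?_⟩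
  -- Lyapunov function V = e² (1 + sin²(φ/2))⁴, with derivative D
  set V : ℝ → ℝ := fun t => (e t)^2 * (1 + (Real.sin (φ t / 2))^2)^4 with hVdef
  set D : ℝ → ℝ := fun t =>
      (2 * e t * (-k * e t * (Real.cos (φ t))^2)) * (1 + (Real.sin (φ t / 2))^2)^4
        + (e t)^2 * (4 * (1 + (Real.sin (φ t / 2))^2)^3 *
          (2 * Real.sin (φ t / 2) * (Real.cos (φ t / 2) * (-k * Real.sin (φ t) / 2)))) with hDdef
  have hV : ∀ t, t₀ ≤ t → HasDerivAt V (D t) t := by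
    intro t ht
    have hφ2 : HasDerivAt (fun t => φ t / 2) (-k * Real.sin (φ t) / 2) t :=
      (hφ t ht).div_const 2
    have hsin : HasDerivAt (fun t => Real.sin (φ t / 2))
        (Real.cos (φ t / 2) * (-k * Real.sin (φ t) / 2)) t :=
      (Real.hasDerivAt_sin _).comp t hφ2
    have hs : HasDerivAt (fun t => 1 + (Real.sin (φ t / 2))^2)
        (2 * Real.sin (φ t / 2) * (Real.cos (φ t / 2) * (-k * Real.sin (φ t) / 2))) t := by
      have := hsin.pow 2
      simpa [Pi.add_def, Pi.pow_def] using (hasDerivAt_const t (1:ℝ)).add this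
    have hs4 : HasDerivAt (fun t => (1 + (Real.sin (φ t / 2))^2)^4)
        (4 * (1 + (Real.sin (φ t / 2))^2)^3 *
          (2 * Real.sin (φ t / 2) * (Real.cos (φ t / 2) * (-k * Real.sin (φ t) / 2)))) t := by
      have := hs.pow 4
      simpa [Pi.pow_def] using this
    have he2 : HasDerivAt (fun t => (e t)^2) (2 * e t * (-k * e t * (Real.cos (φ t))^2)) t := by
      have := (he t ht).pow 2
      simpa [mul_comm, Pi.pow_def] using this
    simpa [hVdef, hDdef, Pi.mul_def] using he2.mul hs4
  -- Key differential inequality: D ≤ -k V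
  have key : ∀ t, t₀ ≤ t → D t ≤ -k * V t := by
    intro t ht
    have habstract : ∀ E a b c S : ℝ, a^2 + b^2 = 1 → c = 1 - 2*a^2 → S = 2*a*b →
        (2 * E * (-k * E * c^2)) * (1 + a^2)^4
          + E^2 * (4 * (1 + a^2)^3 * (2 * a * (b * (-k * S / 2))))
        ≤ -k * (E^2 * (1 + a^2)^4) := by
      intro E a b c S hab hc hS
      subst hc hS
      have hb2 : b^2 = 1 - a^2 := by linarith
      have hE : 0 ≤ E^2 := sq_nonneg E
      have h4 : 2 * a * (b * (-k * (2*a*b) / 2)) = -2*k*(a^2*(1-a^2)) := by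
        linear_combination (-2*k*a^2) * hb2
      rw [h4]
      have hkey : 0 ≤ 1 + a^2 - 8*a^4 + 8*a^6 := by
        nlinarith [sq_nonneg (a^2 - 1/2), sq_nonneg a, sq_nonneg (a^3),
          sq_nonneg (2*a^2-1), sq_nonneg (a*(2*a^2-1))]
      have h3 : (0:ℝ) ≤ (1+a^2)^3 := by positivity
      nlinarith [mul_nonneg (mul_nonneg (mul_nonneg hk.le hE) h3) hkey]
    have hab : (Real.sin (φ t / 2))^2 + (Real.cos (φ t / 2))^2 = 1 :=
      Real.sin_sq_add_cos_sq _
    have hc : Real.cos (φ t) = 1 - 2 * (Real.sin (φ t / 2))^2 := by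
      have h := Real.cos_two_mul (φ t / 2)
      rw [show 2 * (φ t / 2) = φ t by ring] at h
      nlinarith [h, hab]
    have hS : Real.sin (φ t) = 2 * Real.sin (φ t / 2) * Real.cos (φ t / 2) := by
      have h := Real.sin_two_mul (φ t / 2)
      rw [show 2 * (φ t / 2) = φ t by ring] at h
      linarith
    have := habstract (e t) (Real.sin (φ t / 2)) (Real.cos (φ t / 2))
      (Real.cos (φ t)) (Real.sin (φ t)) hab hc (by linarith)
    simpa [hDdef, hVdef] using this
  -- Grönwall: W = V · exp(k (t - t₀)) is antitone on [t₀, ∞)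
  set W : ℝ → ℝ := fun t => V t * Real.exp (k * (t - t₀)) with hWdef
  have hWD : ∀ t, t₀ ≤ t → HasDerivAt W
      (D t * Real.exp (k * (t - t₀)) + V t * (Real.exp (k * (t - t₀)) * k)) t := by
    intro t ht
    have hexp : HasDerivAt (fun t => Real.exp (k * (t - t₀)))
        (Real.exp (k * (t - t₀)) * k) t := by
      have h1 : HasDerivAt (fun t : ℝ => k * (t - t₀)) k t := by
        simpa using (((hasDerivAt_id t).sub_const t₀).const_mul k)
      simpa [Function.comp_def] using (Real.hasDerivAt_exp _).comp t h1
    exact (hV t ht).mul hexp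
  have hanti : AntitoneOn W (Set.Ici t₀) := by
    apply antitoneOn_of_deriv_nonpos (convex_Ici t₀)
    · exact fun t ht => ((hWD t ht).continuousAt).continuousWithinAt
    · intro t ht
      rw [interior_Ici] at ht
      exact ((hWD t (le_of_lt ht)).differentiableAt).differentiableWithinAt
    · intro t ht
      rw [interior_Ici] at ht
      rw [(hWD t ht.le).deriv]
      have h1 := key t ht.le
      have h2 : (0:ℝ) < Real.exp (k * (t - t₀)) := Real.exp_pos _
      nlinarith [mul_le_mul_of_nonneg_right h1 h2.le]
  -- Conclude
  intro t ht
  have hWle : W t ≤ W t₀ := hanti (Set.self_mem_Ici) ht ht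
  have hW0 : W t₀ = V t₀ := by simp [hWdef]
  have hVt₀ : V t₀ ≤ 16 * (e t₀)^2 := by
    have h1 : (Real.sin (φ t₀ / 2))^2 ≤ 1 := Real.sin_sq_le_one _
    have h2 : (1 + (Real.sin (φ t₀ / 2))^2)^4 ≤ 2^4 := by
      apply pow_le_pow_left₀ (by positivity) (by linarith)
    simp only [hVdef]
    nlinarith [sq_nonneg (e t₀)]
  have hVe : (e t)^2 ≤ V t := by
    have h2 : (1:ℝ) ≤ (1 + (Real.sin (φ t / 2))^2)^4 :=
      one_le_pow₀ (by nlinarith [sq_nonneg (Real.sin (φ t / 2))])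
    simp only [hVdef]
    nlinarith [sq_nonneg (e t)]
  have hVdecay : V t ≤ 16 * (e t₀)^2 * Real.exp (-k * (t - t₀)) := by
    have h2 : (0:ℝ) < Real.exp (k * (t - t₀)) := Real.exp_pos _
    have h3 : V t * Real.exp (k * (t - t₀)) ≤ V t₀ := by
      rw [← hW0]; exact hWle
    have h4 : Real.exp (-k * (t - t₀)) * Real.exp (k * (t - t₀)) = 1 := by
      rw [← Real.exp_add]; norm_num
    nlinarith [mul_le_mul_of_nonneg_right hVt₀ (Real.exp_pos (-k * (t - t₀))).le,
      mul_le_mul_of_nonneg_right h3 (Real.exp_pos (-k * (t - t₀))).le]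
  have hsq : (e t)^2 ≤ (4 * |e t₀| * Real.exp (-(k/2) * (t - t₀)))^2 := by
    have hes : |e t₀|^2 = (e t₀)^2 := sq_abs _
    have hee : (Real.exp (-(k/2) * (t - t₀)))^2 = Real.exp (-k * (t - t₀)) := by
      rw [← Real.exp_nat_mul]
      congr 1; push_cast; ring
    calc (e t)^2 ≤ V t := hVe
      _ ≤ 16 * (e t₀)^2 * Real.exp (-k * (t - t₀)) := hVdecay
      _ = (4 * |e t₀| * Real.exp (-(k/2) * (t - t₀)))^2 := by
          rw [mul_pow, mul_pow, hes, hee]; ring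
  have hR : 0 ≤ 4 * |e t₀| * Real.exp (-(k/2) * (t - t₀)) := by positivity
  nlinarith [abs_nonneg (e t), sq_abs (e t), hsq, hR]
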